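/- For s ≤ ⌊n/3⌋ + 1, the number of generally admissible paths of size (n,s) that cross both the line x=0 and the line x=n+2−2s equals binomial(n, s−4). -/
import Mathlib


open Finset
open scoped Classical
noncomputable section

/-- Position (x-coordinate) after `t` steps of the path `p`, where `true` encodes a
right step `(x,y) ↦ (x+1,y+1)` and `false` a left step `(x,y) ↦ (x-1,y+1)`. -/
def pathPos {m : ℕ} (p : Fin m → Bool) (t : ℕ) : ℤ :=
  ∑ j : Fin m, if (j : ℕ) < t then (if p j then (1 : ℤ) else -1) else 0

/-- Generally admissible paths of size `(n,s)`: `n+2` diagonal steps starting at `(0,0)`,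
the 0-th and the last step going right, with exactly `s` left steps
(hence ending at `(n+2-2s, n+2)`). -/
def admissible (n s : ℕ) : Finset (Fin (n + 2) → Bool) :=
  Finset.univ.filter (fun p =>
    (∀ j : Fin (n + 2), (j : ℕ) = 0 → p j = true) ∧
    (∀ j : Fin (n + 2), (j : ℕ) = n + 1 → p j = true) ∧
    (Finset.univ.filter (fun j => p j = false)).card = s)

/-- The path crosses the line `x = 0`, i.e. reaches x-coordinate `-1` at some time. -/
def crossesLeft {m : ℕ} (p : Fin m → Bool) : Prop :=
  ∃ t ∈ Finset.range (m + 1), pathPos p t = -1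

/-- A path of size `(n,s)` crosses the line `x = n+2-2s`,
i.e. reaches x-coordinate `n+3-2s` at some time. -/
def crossesRight (n s : ℕ) (p : Fin (n + 2) → Bool) : Prop :=
  ∃ t ∈ Finset.range (n + 3), pathPos p t = (n : ℤ) + 3 - 2 * s

/-- `L n s`: the number of generally admissible paths of size `(n,s)`
crossing the line `x = 0`. -/
def L (n s : ℕ) : ℕ := ((admissible n s).filter (fun p => crossesLeft p)).card

/-- Constrained lattice paths: `n+2` diagonal steps from `(0,0)` to `(n+2-2s, n+2)`,
staying inside the strip `0 ≤ x ≤ n+2-2s`.  (`n` is allowed to be a negative integer,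
with the convention that there are `max (n+2) 0` steps.) -/
def aPaths (n : ℤ) (s : ℕ) : Finset (Fin (n + 2).toNat → Bool) :=
  Finset.univ.filter (fun p =>
    pathPos p (n + 2).toNat = n + 2 - 2 * s ∧
    ∀ t ∈ Finset.range ((n + 2).toNat + 1),
      0 ≤ pathPos p t ∧ pathPos p t ≤ n + 2 - 2 * s)

/-- `a n s`: the number of lattice paths from `(0,0)` to `(n+2-2s, n+2)` with steps
`(x,y) ↦ (x±1, y+1)` staying inside the strip `0 ≤ x ≤ n+2-2s`. -/
def a (n : ℤ) (s : ℕ) : ℕ := (aPaths n s).card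

/-- Binomial coefficient `C(n,k)` with integer lower index, zero when `k < 0`. -/
def binom (n : ℕ) (k : ℤ) : ℕ := if k < 0 then 0 else n.choose k.toNat

/-- `b W H`: the number of lattice paths from `(0,0)` to `(W,H)` with steps
`(x,y) ↦ (x±1,y+1)` staying in the strip `0 ≤ x ≤ W`, whose first and last steps go
right, and whose intermediate steps come in consecutive same-direction pairs
`(1,2), (3,4), …, (H-3,H-2)`. -/
def bPaths (W H : ℕ) : Finset (Fin H → Bool) :=
  Finset.univ.filter (fun p =>
    (∀ j : Fin H, (j : ℕ) = 0 → p j = true) ∧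
    (∀ j : Fin H, (j : ℕ) = H - 1 → p j = true) ∧
    (∀ j1 j2 : Fin H, (j1 : ℕ) % 2 = 1 → (j2 : ℕ) = (j1 : ℕ) + 1 →
      (j1 : ℕ) + 1 ≤ H - 2 → p j1 = p j2) ∧
    pathPos p H = (W : ℤ) ∧
    ∀ t ∈ Finset.range (H + 1), 0 ≤ pathPos p t ∧ pathPos p t ≤ (W : ℤ))

def b (W H : ℕ) : ℕ := (bPaths W H).card

namespace S10

lemma pathPos_zero {m : ℕ} (p : Fin m → Bool) : pathPos p 0 = 0 := by
  simp [pathPos]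

lemma pathPos_succ {m : ℕ} (p : Fin m → Bool) (t : ℕ) (ht : t < m) :
    pathPos p (t + 1) = pathPos p t + (if p ⟨t, ht⟩ then (1 : ℤ) else -1) := by
  unfold pathPos
  have key : ∀ j : Fin m, (if (j : ℕ) < t + 1 then (if p j then (1 : ℤ) else -1) else 0)
      = (if (j : ℕ) < t then (if p j then (1 : ℤ) else -1) else 0)
        + (if j = ⟨t, ht⟩ then (if p j then (1 : ℤ) else -1) else 0) := by
    intro j
    rcases lt_trichotomy (j : ℕ) t with h | h | h
    · have h1 : (j : ℕ) < t + 1 := by omega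
      have h2 : j ≠ ⟨t, ht⟩ := by simp [Fin.ext_iff]; omega
      simp [h, h1, h2]
    · have h1 : (j : ℕ) < t + 1 := by omega
      have h2 : j = ⟨t, ht⟩ := by simp [Fin.ext_iff]; omega
      simp [h, h1, h2]
    · have h1 : ¬ (j : ℕ) < t + 1 := by omega
      have h2 : j ≠ ⟨t, ht⟩ := by simp [Fin.ext_iff]; omega
      simp [h1, h2, Nat.lt_asymm h]
  rw [Finset.sum_congr rfl (fun j _ => key j), Finset.sum_add_distrib]
  congr 1
  rw [Finset.sum_ite_eq' Finset.univ (⟨t, ht⟩ : Fin m)]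
  simp

lemma pathPos_of_le {m : ℕ} (p : Fin m → Bool) {t : ℕ} (ht : m ≤ t) :
    pathPos p t = pathPos p m := by
  unfold pathPos
  refine Finset.sum_congr rfl fun j _ => ?_
  have h1 : (j : ℕ) < t := lt_of_lt_of_le j.2 ht
  simp [h1, j.2]

lemma pathPos_step_le {m : ℕ} (p : Fin m → Bool) (t : ℕ) :
    pathPos p t - 1 ≤ pathPos p (t + 1) ∧ pathPos p (t + 1) ≤ pathPos p t + 1 := by
  by_cases ht : t < m
  · rw [pathPos_succ p t ht]
    by_cases hp : p ⟨t, ht⟩ <;> simp [hp] <;> omega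
  · push_neg at ht
    rw [pathPos_of_le p ht, pathPos_of_le p (by omega : m ≤ t + 1)]
    omega

/-- Intermediate value: a ±1 walk starting above `c` and ending below `c` hits `c`. -/
lemma exists_hit {m : ℕ} (p : Fin m → Bool) (c : ℤ) :
    ∀ v u : ℕ, u ≤ v → c ≤ pathPos p u → pathPos p v ≤ c →
      ∃ t, u ≤ t ∧ t ≤ v ∧ pathPos p t = c := by
  intro v
  induction v with
  | zero =>
    intro u hu h1 h2
    interval_cases u
    exact ⟨0, le_refl 0, le_refl 0, le_antisymm h2 h1⟩
  | succ w ih =>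
    intro u hu h1 h2
    by_cases hv : c ≤ pathPos p (w + 1)
    · exact ⟨w + 1, hu, le_rfl, le_antisymm h2 hv⟩
    · push_neg at hv
      have hne : u ≠ w + 1 := by
        intro e; rw [e] at h1; omega
      have hu' : u ≤ w := by omega
      have hw : pathPos p w ≤ c := by
        have := (pathPos_step_le p w).1
        omega
      obtain ⟨t, ht1, ht2, ht3⟩ := ih u hu' h1 hw
      exact ⟨t, ht1, by omega, ht3⟩

def fCount {m : ℕ} (p : Fin m → Bool) (t : ℕ) : ℕ :=
  ((Finset.range t).filter (fun j => ∃ hj : j < m, p ⟨j, hj⟩ = false)).card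

lemma fCount_succ {m : ℕ} (p : Fin m → Bool) (t : ℕ) (ht : t < m) :
    fCount p (t + 1) = fCount p t + (if p ⟨t, ht⟩ = false then 1 else 0) := by
  unfold fCount
  rw [Finset.range_add_one, Finset.filter_insert]
  by_cases hp : p ⟨t, ht⟩ = false
  · rw [if_pos ⟨ht, hp⟩, Finset.card_insert_of_notMem (by simp)]
    simp [hp]
  · rw [if_neg (by rintro ⟨h1, h2⟩; exact hp h2)]
    simp [hp]

lemma pathPos_eq_fCount {m : ℕ} (p : Fin m → Bool) :
    ∀ t : ℕ, t ≤ m → pathPos p t = (t : ℤ) - 2 * fCount p t := by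
  intro t
  induction t with
  | zero => intro _; simp [pathPos_zero, fCount]
  | succ w ih =>
    intro hw
    have hwm : w < m := by omega
    rw [pathPos_succ p w hwm, ih (by omega), fCount_succ p w hwm]
    by_cases hp : p ⟨w, hwm⟩ <;> simp [hp] <;> push_cast <;> ring

lemma fCount_mono {m : ℕ} (p : Fin m → Bool) {t t' : ℕ} (h : t ≤ t') :
    fCount p t ≤ fCount p t' :=
  Finset.card_le_card (Finset.filter_subset_filter _ (Finset.range_subset_range.2 h))

lemma fCount_lip {m : ℕ} (p : Fin m → Bool) {t t' : ℕ} (h : t ≤ t') :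
    fCount p t' ≤ fCount p t + (t' - t) := by
  unfold fCount
  have hsub : (Finset.range t').filter (fun j => ∃ hj : j < m, p ⟨j, hj⟩ = false)
      ⊆ ((Finset.range t).filter (fun j => ∃ hj : j < m, p ⟨j, hj⟩ = false)) ∪ Finset.Ico t t' := by
    intro j hj
    rw [Finset.mem_filter, Finset.mem_range] at hj
    by_cases hjt : j < t
    · exact Finset.mem_union_left _ (Finset.mem_filter.2 ⟨Finset.mem_range.2 hjt, hj.2⟩)
    · exact Finset.mem_union_right _ (Finset.mem_Ico.2 ⟨by omega, hj.1⟩)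
  calc _ ≤ _ := Finset.card_le_card hsub
    _ ≤ _ + (Finset.Ico t t').card := Finset.card_union_le _ _
    _ = _ := by rw [Nat.card_Ico]

lemma fCount_total {m : ℕ} (p : Fin m → Bool) :
    fCount p m = (Finset.univ.filter (fun j => p j = false)).card := by
  unfold fCount
  rw [Finset.card_filter, Finset.card_filter, ← Fin.sum_univ_eq_sum_range
    (fun j => if ∃ hj : j < m, p ⟨j, hj⟩ = false then 1 else 0)]
  refine Finset.sum_congr rfl fun j _ => ?_
  by_cases hp : p j = false
  · rw [if_pos ⟨j.2, by simpa using hp⟩, if_pos hp]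
  · rw [if_neg, if_neg hp]
    rintro ⟨h1, h2⟩
    exact hp (by simpa using h2)

/-- Total-falses-count vs endpoint. -/
lemma card_falses_iff {m : ℕ} (p : Fin m → Bool) (k : ℕ) :
    (Finset.univ.filter (fun j => p j = false)).card = k ↔
      pathPos p m = (m : ℤ) - 2 * k := by
  rw [pathPos_eq_fCount p m le_rfl, ← fCount_total]
  constructor
  · rintro rfl; rfl
  · intro h; omega


def flipI {m : ℕ} (p : Fin m → Bool) (a b : ℕ) : Fin m → Bool :=
  fun j => if a ≤ (j : ℕ) ∧ (j : ℕ) < b then !(p j) else p j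

lemma flipI_flipI {m : ℕ} (p : Fin m → Bool) (a b : ℕ) :
    flipI (flipI p a b) a b = p := by
  funext j
  by_cases hc : a ≤ (j : ℕ) ∧ (j : ℕ) < b <;> simp [flipI, hc]

lemma pathPos_flipI {m : ℕ} (p : Fin m → Bool) (a b : ℕ) (hab : a ≤ b) (t : ℕ) :
    pathPos (flipI p a b) t
      = pathPos p t - 2 * (pathPos p (min t b) - pathPos p (min t a)) := by
  induction t with
  | zero => simp [pathPos_zero]
  | succ t ih =>
    by_cases ht : t < m
    · rw [pathPos_succ _ t ht, pathPos_succ p t ht, ih]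
      by_cases h1 : t < a
      · have e1 : min t a = t := by omega
        have e2 : min t b = t := by omega
        have e3 : min (t + 1) a = t + 1 := by omega
        have e4 : min (t + 1) b = t + 1 := by omega
        have hf : flipI p a b ⟨t, ht⟩ = p ⟨t, ht⟩ := by
          simp only [flipI]; rw [if_neg]; omega
        rw [e1, e2, e3, e4, hf]
        ring
      · by_cases h2 : t < b
        · have e1 : min t a = a := by omega
          have e2 : min t b = t := by omega
          have e3 : min (t + 1) a = a := by omega
          have e4 : min (t + 1) b = t + 1 := by omega
          have hf : flipI p a b ⟨t, ht⟩ = !(p ⟨t, ht⟩) := by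
            simp only [flipI]; rw [if_pos]; omega
          rw [e1, e2, e3, e4, hf, pathPos_succ p t ht]
          by_cases hp : p ⟨t, ht⟩ <;> simp [hp] <;> ring
        · have e1 : min t a = a := by omega
          have e2 : min t b = b := by omega
          have e3 : min (t + 1) a = a := by omega
          have e4 : min (t + 1) b = b := by omega
          have hf : flipI p a b ⟨t, ht⟩ = p ⟨t, ht⟩ := by
            simp only [flipI]; rw [if_neg]; omega
          rw [e1, e2, e3, e4, hf]
          ring
    · push_neg at ht
      have h1 : pathPos (flipI p a b) (t + 1) = pathPos (flipI p a b) t := by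
        rw [pathPos_of_le _ ht, pathPos_of_le _ (by omega : m ≤ t + 1)]
      have h2 : pathPos p (t + 1) = pathPos p t := by
        rw [pathPos_of_le _ ht, pathPos_of_le _ (by omega : m ≤ t + 1)]
      have h3 : pathPos p (min (t + 1) b) = pathPos p (min t b) := by
        by_cases hb : b ≤ t
        · rw [min_eq_right hb, min_eq_right (by omega)]
        · rw [pathPos_of_le _ (by omega : m ≤ min (t+1) b), pathPos_of_le _ (by omega : m ≤ min t b)]
      have h4 : pathPos p (min (t + 1) a) = pathPos p (min t a) := by
        by_cases hb : a ≤ t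
        · rw [min_eq_right hb, min_eq_right (by omega)]
        · rw [pathPos_of_le _ (by omega : m ≤ min (t+1) a), pathPos_of_le _ (by omega : m ≤ min t a)]
      rw [h1, h2, h3, h4, ih]

lemma pathPos_flipI_left {m : ℕ} (p : Fin m → Bool) {a b t : ℕ} (hab : a ≤ b) (h : t ≤ a) :
    pathPos (flipI p a b) t = pathPos p t := by
  rw [pathPos_flipI p a b hab t, min_eq_left (by omega), min_eq_left (by omega)]
  ring

lemma pathPos_flipI_mid {m : ℕ} (p : Fin m → Bool) {a b t : ℕ} (ha : a ≤ t) (hb : t ≤ b) :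
    pathPos (flipI p a b) t = 2 * pathPos p a - pathPos p t := by
  rw [pathPos_flipI p a b (le_trans ha hb) t, min_eq_left hb, min_eq_right ha]
  ring

lemma pathPos_flipI_right {m : ℕ} (p : Fin m → Bool) {a b t : ℕ} (hab : a ≤ b) (h : b ≤ t) :
    pathPos (flipI p a b) t = pathPos p t - 2 * (pathPos p b - pathPos p a) := by
  rw [pathPos_flipI p a b hab t, min_eq_right h, min_eq_right (le_trans hab h)]


def toSet (n : ℕ) (p : Fin (n + 2) → Bool) : Finset (Fin n) :=
  Finset.univ.filter (fun i : Fin n => p ⟨(i : ℕ) + 1, by omega⟩ = false)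

def ofSet (n : ℕ) (S : Finset (Fin n)) : Fin (n + 2) → Bool :=
  fun jj => if ∃ i ∈ S, (i : ℕ) + 1 = (jj : ℕ) then false else true

lemma mem_admissible {n s : ℕ} {p : Fin (n + 2) → Bool} :
    p ∈ admissible n s ↔
      (∀ j : Fin (n + 2), (j : ℕ) = 0 → p j = true) ∧
      (∀ j : Fin (n + 2), (j : ℕ) = n + 1 → p j = true) ∧
      (Finset.univ.filter (fun j => p j = false)).card = s := by
  rw [admissible, Finset.mem_filter]
  simp

lemma card_toSet {n s : ℕ} {p : Fin (n + 2) → Bool} (hp : p ∈ admissible n s) :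
    (toSet n p).card = s := by
  obtain ⟨h0, h1, hc⟩ := mem_admissible.1 hp
  rw [← hc]
  apply Finset.card_bij (fun (i : Fin n) _ => (⟨(i : ℕ) + 1, by omega⟩ : Fin (n + 2)))
  · intro i hi
    rw [toSet, Finset.mem_filter] at hi
    rw [Finset.mem_filter]
    exact ⟨Finset.mem_univ _, hi.2⟩
  · intro i _ i' _ hee
    have : (i : ℕ) + 1 = (i' : ℕ) + 1 := by
      simpa [Fin.ext_iff] using hee
    exact Fin.ext (by omega)
  · intro j hj
    rw [Finset.mem_filter] at hj
    have hj0 : (j : ℕ) ≠ 0 := fun e => by simp [h0 j e] at hj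
    have hjn : (j : ℕ) ≠ n + 1 := fun e => by simp [h1 j e] at hj
    have hlt : (j : ℕ) - 1 < n := by have := j.2; omega
    refine ⟨⟨(j : ℕ) - 1, hlt⟩, ?_, ?_⟩
    · rw [toSet, Finset.mem_filter]
      refine ⟨Finset.mem_univ _, ?_⟩
      convert hj.2 using 2
      exact Fin.ext (by simp; omega)
    · exact Fin.ext (by simp; omega)

lemma ofSet_mem {n k : ℕ} {S : Finset (Fin n)} (hS : S.card = k) :
    ofSet n S ∈ admissible n k := by
  rw [mem_admissible]
  refine ⟨?_, ?_, ?_⟩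
  · intro j hj
    rw [ofSet, if_neg]
    rintro ⟨i, -, hi⟩
    omega
  · intro j hj
    rw [ofSet, if_neg]
    rintro ⟨i, -, hi⟩
    have := i.2
    omega
  · rw [← hS]
    symm
    apply Finset.card_bij (fun (i : Fin n) _ => (⟨(i : ℕ) + 1, by omega⟩ : Fin (n + 2)))
    · intro i hi
      rw [Finset.mem_filter]
      refine ⟨Finset.mem_univ _, ?_⟩
      rw [ofSet, if_pos]
      exact ⟨i, hi, rfl⟩
    · intro i _ i' _ hee
      have : (i : ℕ) + 1 = (i' : ℕ) + 1 := by
        simpa [Fin.ext_iff] using hee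
      exact Fin.ext (by omega)
    · intro j hj
      rw [Finset.mem_filter, ofSet] at hj
      have hj2 := hj.2
      by_cases hex : ∃ i ∈ S, (i : ℕ) + 1 = (j : ℕ)
      · obtain ⟨i, hiS, hi⟩ := hex
        exact ⟨i, hiS, Fin.ext (by simpa using hi)⟩
      · rw [if_neg hex] at hj2
        simp at hj2

lemma toSet_ofSet {n k : ℕ} {S : Finset (Fin n)} (hS : S.card = k) :
    toSet n (ofSet n S) = S := by
  ext i
  rw [toSet, Finset.mem_filter]
  simp only [Finset.mem_univ, true_and]
  rw [ofSet]
  constructor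
  · intro hh
    by_cases hex : ∃ i' ∈ S, (i' : ℕ) + 1 = ((⟨(i : ℕ) + 1, by omega⟩ : Fin (n + 2)) : ℕ)
    · obtain ⟨i', hi'S, hi'⟩ := hex
      simp at hi'
      have : i' = i := Fin.ext (by omega)
      rwa [← this]
    · rw [if_neg hex] at hh
      simp at hh
  · intro hiS
    rw [if_pos ⟨i, hiS, rfl⟩]

lemma ofSet_toSet {n s : ℕ} {p : Fin (n + 2) → Bool} (hp : p ∈ admissible n s) :
    ofSet n (toSet n p) = p := by
  obtain ⟨h0, h1, -⟩ := mem_admissible.1 hp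
  funext jj
  rw [ofSet]
  by_cases hex : ∃ i ∈ toSet n p, (i : ℕ) + 1 = (jj : ℕ)
  · rw [if_pos hex]
    obtain ⟨i, hiS, hi⟩ := hex
    rw [toSet, Finset.mem_filter] at hiS
    have : (⟨(i : ℕ) + 1, by omega⟩ : Fin (n + 2)) = jj := Fin.ext hi
    rw [← this, hiS.2]
  · rw [if_neg hex]
    by_cases hj0 : (jj : ℕ) = 0
    · rw [h0 jj hj0]
    · by_cases hjn : (jj : ℕ) = n + 1
      · rw [h1 jj hjn]
      · by_contra hc
        have hpf : p jj = false := by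
          cases hpj : p jj
          · rfl
          · rw [hpj] at hc; exact absurd rfl hc
        have hlt : (jj : ℕ) - 1 < n := by have := jj.2; omega
        apply hex
        refine ⟨⟨(jj : ℕ) - 1, hlt⟩, ?_, by simp; omega⟩
        rw [toSet, Finset.mem_filter]
        refine ⟨Finset.mem_univ _, ?_⟩
        convert hpf using 2
        exact Fin.ext (by simp; omega)

lemma card_admissible (n k : ℕ) : (admissible n k).card = n.choose k := by
  have hpc := Finset.card_powersetCard k (Finset.univ : Finset (Fin n))
  rw [Finset.card_univ, Fintype.card_fin] at hpc
  rw [← hpc]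
  refine Finset.card_bij' (fun p _ => toSet n p) (fun S _ => ofSet n S) ?_ ?_ ?_ ?_
  · intro p hp
    rw [Finset.mem_powersetCard]
    exact ⟨Finset.subset_univ _, card_toSet hp⟩
  · intro S hS
    rw [Finset.mem_powersetCard] at hS
    exact ofSet_mem hS.2
  · intro p hp
    exact ofSet_toSet hp
  · intro S hS
    rw [Finset.mem_powersetCard] at hS
    exact toSet_ofSet hS.2


/-- First hitting time of level `c`. -/
def fh {m : ℕ} (p : Fin m → Bool) (c : ℤ) : ℕ := sInf {t | pathPos p t = c}

lemma fh_spec {m : ℕ} {p : Fin m → Bool} {c : ℤ} (h : ∃ t, pathPos p t = c) :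
    pathPos p (fh p c) = c :=
  Nat.sInf_mem h

lemma fh_le {m : ℕ} {p : Fin m → Bool} {c : ℤ} {t : ℕ} (h : pathPos p t = c) :
    fh p c ≤ t :=
  Nat.sInf_le h

lemma fh_not {m : ℕ} (p : Fin m → Bool) (c : ℤ) {t : ℕ} (h : t < fh p c) :
    pathPos p t ≠ c :=
  Nat.notMem_of_lt_sInf h

def Fmap (n s : ℕ) (p : Fin (n + 2) → Bool) : Fin (n + 2) → Bool :=
  flipI p (fh p (-1)) (fh p ((n : ℤ) + 3 - 2 * s))

def Gmap (n s : ℕ) (q : Fin (n + 2) → Bool) : Fin (n + 2) → Bool :=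
  flipI q (fh q (-1)) (fh q (2 * (s : ℤ) - n - 5))

lemma fwd {n s : ℕ} (hs3 : 3 * s ≤ n + 3) {p : Fin (n + 2) → Bool}
    (hp : p ∈ admissible n s) (hcl : crossesLeft p) (hcr : crossesRight n s p) :
    Fmap n s p ∈ admissible n (n + 4 - s) ∧ Gmap n s (Fmap n s p) = p := by
  obtain ⟨h0, h1, hcard⟩ := mem_admissible.1 hp
  have hend : pathPos p (n + 2) = (n : ℤ) + 2 - 2 * s := by
    have := (card_falses_iff p s).1 hcard
    push_cast at this
    linarith
  obtain ⟨tL, htLr, htL⟩ := hcl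
  obtain ⟨tR, htRr, htR⟩ := hcr
  rw [Finset.mem_range] at htLr htRr
  set t1 := fh p (-1) with ht1def
  set t2 := fh p ((n : ℤ) + 3 - 2 * s) with ht2def
  have e1 : pathPos p t1 = -1 := fh_spec ⟨tL, htL⟩
  have e2 : pathPos p t2 = (n : ℤ) + 3 - 2 * s := fh_spec ⟨tR, htR⟩
  have ht1le : t1 ≤ n + 2 := le_trans (fh_le htL) (by omega)
  have ht2le : t2 ≤ n + 2 := le_trans (fh_le htR) (by omega)
  have hp0 : pathPos p 0 = 0 := pathPos_zero p
  have hp1 : pathPos p 1 = 1 := by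
    rw [pathPos_succ p 0 (by omega), hp0, h0 ⟨0, by omega⟩ rfl]
    simp
  have h2t1 : 2 ≤ t1 := by
    by_contra hh
    push_neg at hh
    interval_cases t1
    · rw [hp0] at e1; omega
    · rw [hp1] at e1; omega
  have hlast : pathPos p (n + 2) = pathPos p (n + 1) + 1 := by
    rw [pathPos_succ p (n + 1) (by omega), h1 ⟨n + 1, by omega⟩ rfl]
    simp
  have ht2n : t2 ≤ n := by
    have hA : pathPos p (n + 2) ≠ (n : ℤ) + 3 - 2 * s := by rw [hend]; intro hh; omega
    have hB : pathPos p (n + 1) ≠ (n : ℤ) + 3 - 2 * s := by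
      intro hh; rw [hh] at hlast; rw [hend] at hlast; omega
    rcases Nat.lt_or_ge t2 (n + 1) with h | h
    · omega
    · have hcases : t2 = n + 1 ∨ t2 = n + 2 := by omega
      rcases hcases with hc | hc
      · rw [hc] at e2; exact absurd e2 hB
      · rw [hc] at e2; exact absurd e2 hA
  have hnonneg : ∀ t, t < t1 → 0 ≤ pathPos p t := by
    intro t ht
    by_contra hc
    push_neg at hc
    obtain ⟨t', _, h2', h3'⟩ := exists_hit p (-1) t 0 (Nat.zero_le t)
      (by rw [hp0]; omega) (by omega)
    have := fh_le h3'
    omega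
  have ht1t2 : t1 < t2 := by
    have hne : t1 ≠ t2 := by
      intro e; rw [e, e2] at e1; omega
    by_contra hh
    push_neg at hh
    have h21 : t2 < t1 := by omega
    have A1 := pathPos_eq_fCount p t1 (by omega)
    have A2 := pathPos_eq_fCount p t2 (by omega)
    have A4 : fCount p (n + 2) = s := by rw [fCount_total]; exact hcard
    have A5 : fCount p t1 ≤ fCount p (n + 2) := fCount_mono p (by omega)
    have A6 := fCount_lip p (le_of_lt h21)
    rw [e1] at A1
    rw [e2] at A2
    omega
  -- facts about q
  have hqmem : Fmap n s p ∈ admissible n (n + 4 - s) := by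
    rw [Fmap, ← ht1def, ← ht2def, mem_admissible]
    refine ⟨?_, ?_, ?_⟩
    · intro j hj
      simp only [flipI]
      rw [if_neg (by omega)]
      exact h0 j hj
    · intro j hj
      simp only [flipI]
      rw [if_neg (by omega)]
      exact h1 j hj
    · rw [card_falses_iff _ (n + 4 - s)]
      rw [pathPos_flipI_right p (le_of_lt ht1t2) ht2le, hend, e1, e2]
      push_cast [show s ≤ n + 4 by omega]
      ring
  refine ⟨hqmem, ?_⟩
  set q := Fmap n s p with hqdef
  have hqf : q = flipI p t1 t2 := by rw [hqdef, Fmap, ← ht1def, ← ht2def]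
  have hq_at_t1 : pathPos q t1 = -1 := by
    rw [hqf, pathPos_flipI_left p (le_of_lt ht1t2) le_rfl]; exact e1
  have hq_at_t2 : pathPos q t2 = 2 * (s : ℤ) - n - 5 := by
    rw [hqf, pathPos_flipI_mid p (le_of_lt ht1t2) le_rfl, e1, e2]
    ring
  have hfh1 : fh q (-1) = t1 := by
    refine le_antisymm (fh_le hq_at_t1) ?_
    by_contra hh
    push_neg at hh
    set u := fh q (-1) with hudef
    have hu : pathPos q u = -1 := fh_spec ⟨t1, hq_at_t1⟩
    rw [hqf, pathPos_flipI_left p (le_of_lt ht1t2) (by omega)] at hu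
    have := fh_le hu
    omega
  have hfh2 : fh q (2 * (s : ℤ) - n - 5) = t2 := by
    refine le_antisymm (fh_le hq_at_t2) ?_
    by_contra hh
    push_neg at hh
    set u := fh q (2 * (s : ℤ) - n - 5) with hudef
    have hu : pathPos q u = 2 * (s : ℤ) - n - 5 := fh_spec ⟨t2, hq_at_t2⟩
    rcases Nat.lt_or_ge u t1 with hcase | hcase
    · rw [hqf, pathPos_flipI_left p (le_of_lt ht1t2) (by omega)] at hu
      have := hnonneg u hcase
      omega
    · rcases Nat.eq_or_lt_of_le hcase with hcase2 | hcase2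
      · rw [hcase2] at hq_at_t1
        rw [hq_at_t1] at hu
        omega
      · rw [hqf, pathPos_flipI_mid p (by omega) (by omega), e1] at hu
        have hpu : pathPos p u = (n : ℤ) + 3 - 2 * s := by omega
        have := fh_le hpu
        omega
  rw [Gmap, hfh1, hfh2, hqf, flipI_flipI]

lemma bwd {n s : ℕ} (hs3 : 3 * s ≤ n + 3) {q : Fin (n + 2) → Bool}
    (hq : q ∈ admissible n (n + 4 - s)) :
    (Gmap n s q ∈ admissible n s ∧ crossesLeft (Gmap n s q) ∧
      crossesRight n s (Gmap n s q)) ∧ Fmap n s (Gmap n s q) = q := by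
  obtain ⟨h0, h1, hcard⟩ := mem_admissible.1 hq
  have hs4 : 4 ≤ s := by
    have hsub : Finset.univ.filter (fun j => q j = false) ⊆
        (Finset.univ.erase (⟨0, by omega⟩ : Fin (n + 2))).erase ⟨n + 1, by omega⟩ := by
      intro j hj
      rw [Finset.mem_filter] at hj
      rw [Finset.mem_erase, Finset.mem_erase]
      refine ⟨?_, ?_, Finset.mem_univ _⟩
      · intro e
        rw [h1 j (by rw [e])] at hj
        simp at hj
      · intro e
        rw [h0 j (by rw [e])] at hj
        simp at hj
    have hle := Finset.card_le_card hsub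
    rw [Finset.card_erase_of_mem (by
      rw [Finset.mem_erase]
      exact ⟨by simp [Fin.ext_iff], Finset.mem_univ _⟩),
      Finset.card_erase_of_mem (Finset.mem_univ _), Finset.card_univ,
      Fintype.card_fin] at hle
    rw [hcard] at hle
    omega
  have hend : pathPos q (n + 2) = 2 * (s : ℤ) - n - 6 := by
    have := (card_falses_iff q (n + 4 - s)).1 hcard
    rw [this]
    push_cast [show s ≤ n + 4 by omega]
    ring
  have hq0 : pathPos q 0 = 0 := pathPos_zero q
  have hq1 : pathPos q 1 = 1 := by
    rw [pathPos_succ q 0 (by omega), hq0, h0 ⟨0, by omega⟩ rfl]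
    simp
  have hlast : pathPos q (n + 2) = pathPos q (n + 1) + 1 := by
    rw [pathPos_succ q (n + 1) (by omega), h1 ⟨n + 1, by omega⟩ rfl]
    simp
  obtain ⟨tL, htL0, htLle, htL⟩ := exists_hit q (-1) (n + 2) 0 (Nat.zero_le _)
    (by rw [hq0]; omega) (by rw [hend]; omega)
  obtain ⟨tR, htR0, htRle, htR⟩ := exists_hit q (2 * (s : ℤ) - n - 5) (n + 2) 0 (Nat.zero_le _)
    (by rw [hq0]; omega) (by rw [hend]; omega)
  set t1 := fh q (-1) with ht1def
  set t2 := fh q (2 * (s : ℤ) - n - 5) with ht2def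
  have e1 : pathPos q t1 = -1 := fh_spec ⟨tL, htL⟩
  have e2 : pathPos q t2 = 2 * (s : ℤ) - n - 5 := fh_spec ⟨tR, htR⟩
  have ht1le : t1 ≤ n + 2 := le_trans (fh_le htL) htLle
  have ht2le : t2 ≤ n + 2 := le_trans (fh_le htR) htRle
  have h2t1 : 2 ≤ t1 := by
    by_contra hh
    push_neg at hh
    interval_cases t1
    · rw [hq0] at e1; omega
    · rw [hq1] at e1; omega
  have ht2n : t2 ≤ n := by
    have hA : pathPos q (n + 2) ≠ 2 * (s : ℤ) - n - 5 := by rw [hend]; intro hh; omega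
    have hB : pathPos q (n + 1) ≠ 2 * (s : ℤ) - n - 5 := by
      intro hh; rw [hh] at hlast; rw [hend] at hlast; omega
    rcases Nat.lt_or_ge t2 (n + 1) with h | h
    · omega
    · have hcases : t2 = n + 1 ∨ t2 = n + 2 := by omega
      rcases hcases with hc | hc
      · rw [hc] at e2; exact absurd e2 hB
      · rw [hc] at e2; exact absurd e2 hA
  have ht1t2 : t1 < t2 := by
    obtain ⟨t', _, h2', h3'⟩ := exists_hit q (-1) t2 0 (Nat.zero_le _)
      (by rw [hq0]; omega) (by rw [e2]; omega)
    have hle1 := fh_le h3'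
    have hne : t1 ≠ t2 := by
      intro e; rw [e, e2] at e1; omega
    omega
  have hub : ∀ t, pathPos q t ≤ (s : ℤ) - 2 := by
    intro t
    rcases Nat.lt_or_ge t (n + 3) with htm | htm
    · have B1 := pathPos_eq_fCount q t (by omega)
      have B2 := fCount_lip q (show t ≤ n + 2 by omega)
      have B3 : fCount q (n + 2) = n + 4 - s := by rw [fCount_total]; exact hcard
      omega
    · rw [pathPos_of_le q (by omega)]
      rw [hend]
      omega
  set p := Gmap n s q with hpdef
  have hpf : p = flipI q t1 t2 := by rw [hpdef, Gmap, ← ht1def, ← ht2def]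
  have hp_at_t1 : pathPos p t1 = -1 := by
    rw [hpf, pathPos_flipI_left q (le_of_lt ht1t2) le_rfl]; exact e1
  have hp_at_t2 : pathPos p t2 = (n : ℤ) + 3 - 2 * s := by
    rw [hpf, pathPos_flipI_mid q (le_of_lt ht1t2) le_rfl, e1, e2]
    ring
  have hpmem : p ∈ admissible n s := by
    rw [mem_admissible]
    refine ⟨?_, ?_, ?_⟩
    · intro j hj
      rw [hpf]
      simp only [flipI]
      rw [if_neg (by omega)]
      exact h0 j hj
    · intro j hj
      rw [hpf]
      simp only [flipI]
      rw [if_neg (by omega)]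
      exact h1 j hj
    · rw [card_falses_iff _ s]
      rw [hpf, pathPos_flipI_right q (le_of_lt ht1t2) ht2le, hend, e1, e2]
      push_cast
      ring
  refine ⟨⟨hpmem, ⟨t1, Finset.mem_range.2 (by omega), hp_at_t1⟩,
    ⟨t2, Finset.mem_range.2 (by omega), hp_at_t2⟩⟩, ?_⟩
  have hfh1 : fh p (-1) = t1 := by
    refine le_antisymm (fh_le hp_at_t1) ?_
    by_contra hh
    push_neg at hh
    set u := fh p (-1) with hudef
    have hu : pathPos p u = -1 := fh_spec ⟨t1, hp_at_t1⟩
    rw [hpf, pathPos_flipI_left q (le_of_lt ht1t2) (by omega)] at hu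
    have := fh_le hu
    omega
  have hfh2 : fh p ((n : ℤ) + 3 - 2 * s) = t2 := by
    refine le_antisymm (fh_le hp_at_t2) ?_
    by_contra hh
    push_neg at hh
    set u := fh p ((n : ℤ) + 3 - 2 * s) with hudef
    have hu : pathPos p u = (n : ℤ) + 3 - 2 * s := fh_spec ⟨t2, hp_at_t2⟩
    rcases Nat.lt_or_ge u t1 with hcase | hcase
    · rw [hpf, pathPos_flipI_left q (le_of_lt ht1t2) (by omega)] at hu
      have := hub u
      omega
    · rcases Nat.eq_or_lt_of_le hcase with hcase2 | hcase2
      · rw [hcase2] at hp_at_t1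
        rw [hp_at_t1] at hu
        omega
      · rw [hpf, pathPos_flipI_mid q (by omega) (by omega), e1] at hu
        have hqu : pathPos q u = 2 * (s : ℤ) - n - 5 := by omega
        have := fh_le hqu
        omega
  rw [Fmap, hfh1, hfh2, hpf, flipI_flipI]


end S10

open S10 in
/-- for `s ≤ ⌊n/3⌋ + 1`, the number of generally admissible paths of size
`(n,s)` crossing both `x = 0` and `x = n+2-2s` equals `C(n, s-4)` (zero for `s < 4`). -/
theorem stmt10 (n s : ℕ) (h : s ≤ n / 3 + 1) :
    ((admissible n s).filter (fun p => crossesLeft p ∧ crossesRight n s p)).card =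
      binom n ((s : ℤ) - 4) := by
  have hs3 : 3 * s ≤ n + 3 := by omega
  have key : ((admissible n s).filter (fun p => crossesLeft p ∧ crossesRight n s p)).card
      = (admissible n (n + 4 - s)).card := by
    refine Finset.card_bij' (fun p _ => Fmap n s p) (fun q _ => Gmap n s q) ?_ ?_ ?_ ?_
    · intro p hp
      rw [Finset.mem_filter] at hp
      exact (fwd hs3 hp.1 hp.2.1 hp.2.2).1
    · intro q hq
      rw [Finset.mem_filter]
      obtain ⟨⟨m1, m2, m3⟩, -⟩ := bwd hs3 hq
      exact ⟨m1, m2, m3⟩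
    · intro p hp
      rw [Finset.mem_filter] at hp
      exact (fwd hs3 hp.1 hp.2.1 hp.2.2).2
    · intro q hq
      exact (bwd hs3 hq).2
  rw [key, card_admissible]
  rcases Nat.lt_or_ge s 4 with h4 | h4
  · rw [binom, if_pos (by omega)]
    exact Nat.choose_eq_zero_of_lt (by omega)
  · rw [binom, if_neg (by omega)]
    have h1 : ((s : ℤ) - 4).toNat = s - 4 := by omega
    rw [h1]
    have h2 : n + 4 - s = n - (s - 4) := by omega
    rw [h2, Nat.choose_symm (by omega)]
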